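/- Fix integers N ≥ 1 and K ≥ 2. For each k = 0,…,K−1 let H⁺_{d,k} : ℝ^N × ℝ^N → ℝ be differentiable and let F⁻_{d,k}, F⁺_{d,k} : ℝ^N × ℝ^N → ℝ^N be arbitrary maps. A discrete curve (q_k, p_k)_{k=0,…,K} in ℝ^N × ℝ^N satisfies the discrete Lagrange–d'Alembert equations q_k = D₂H⁺_{d,k−1}(q_{k−1}, p_k) − F⁺_{d,k−1}(q_{k−1}, p_k) and p_k = D₁H⁺_{d,k}(q_k, p_{k+1}) − F⁻_{d,k}(q_k, p_{k+1}) for all k = 1,…,K−1 if and only if for every variation (δq_k, δp_k)_{k=0,…,K} with δq₀ = 0 and δp_K = 0 one has δB_d − Σ_{k=0}^{K−1} ( F⁻_{d,k}(q_k, p_{k+1})·δq_k + F⁺_{d,k}(q_k, p_{k+1})·δp_{k+1} ) = 0, where δB_d denotes the derivative at ε = 0 of ε ↦ B_d[(q_k + ε δq_k, p_k + ε δp_k)_k]. (Pathwise, deterministic form of the discrete stochastic Lagrange–d'Alembert principle in phase space, Theorem 3.1.) -/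

import Mathlib

/- STATEMENT 0: Discrete stochastic Lagrange–d'Alembert principle in phase space
   (pathwise, deterministic form of Theorem 3.1). -/

noncomputable section
open scoped BigOperators

abbrev E (N : ℕ) : Type := EuclideanSpace ℝ (Fin N)

/-- Gradient with respect to the first argument. -/
noncomputable def D1 {N : ℕ} (H : E N × E N → ℝ) (x y : E N) : E N :=
  gradient (fun x' => H (x', y)) x

/-- Gradient with respect to the second argument. -/
noncomputable def D2 {N : ℕ} (H : E N × E N → ℝ) (x y : E N) : E N :=
  gradient (fun y' => H (x, y')) y

/-- The discrete action functional
`B_d = p_K·q_K − Σ_{k=0}^{K−1} ( p_{k+1}·q_{k+1} − H⁺_{d,k}(q_k, p_{k+1}) )`. -/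
noncomputable def Bd {N : ℕ} (K : ℕ) (Hd : ℕ → E N × E N → ℝ) (q p : ℕ → E N) : ℝ :=
  (inner ℝ (p K) (q K) : ℝ) -
    ∑ k ∈ Finset.range K, ((inner ℝ (p (k + 1)) (q (k + 1)) : ℝ) - Hd k (q k, p (k + 1)))

/-! ### Auxiliary lemmas -/

lemma inner_gradient_eq {N : ℕ} (f : E N → ℝ) (x a : E N) :
    (inner ℝ (gradient f x) a : ℝ) = fderiv ℝ f x a := by
  rw [gradient]
  exact InnerProductSpace.toDual_symm_apply

lemma fderiv_apply_pair {N : ℕ} (H : E N × E N → ℝ) (hH : Differentiable ℝ H) (x y a b : E N) :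
    fderiv ℝ H (x, y) (a, b)
      = (inner ℝ (D1 H x y) a : ℝ) + (inner ℝ (D2 H x y) b : ℝ) := by
  have h1 : fderiv ℝ (fun x' => H (x', y)) x
      = (fderiv ℝ H (x, y)).comp (ContinuousLinearMap.inl ℝ (E N) (E N)) :=
    HasFDerivAt.fderiv (((hH (x, y)).hasFDerivAt).comp x (hasFDerivAt_prodMk_left x y))
  have h2 : fderiv ℝ (fun y' => H (x, y')) y
      = (fderiv ℝ H (x, y)).comp (ContinuousLinearMap.inr ℝ (E N) (E N)) :=
    HasFDerivAt.fderiv (((hH (x, y)).hasFDerivAt).comp y (hasFDerivAt_prodMk_right x y))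
  have hab : ((a, b) : E N × E N) = ((a, (0 : E N)) + ((0 : E N), b)) := by simp
  rw [D1, D2, inner_gradient_eq, inner_gradient_eq, h1, h2]
  simp only [ContinuousLinearMap.comp_apply, ContinuousLinearMap.inl_apply,
    ContinuousLinearMap.inr_apply]
  conv_lhs => rw [hab]
  rw [map_add]

lemma hasDerivAt_Bd {N K : ℕ} (Hd : ℕ → E N × E N → ℝ) (hHd : ∀ k, Differentiable ℝ (Hd k))
    (q p δq δp : ℕ → E N) :
    HasDerivAt (fun ε : ℝ => Bd K Hd (fun k => q k + ε • δq k) (fun k => p k + ε • δp k))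
      ((inner ℝ (p K) (δq K) : ℝ) + (inner ℝ (δp K) (q K) : ℝ)
        - ∑ k ∈ Finset.range K,
            ((inner ℝ (p (k + 1)) (δq (k + 1)) : ℝ) + (inner ℝ (δp (k + 1)) (q (k + 1)) : ℝ)
              - ((inner ℝ (D1 (Hd k) (q k) (p (k + 1))) (δq k) : ℝ)
                 + (inner ℝ (D2 (Hd k) (q k) (p (k + 1))) (δp (k + 1)) : ℝ)))) 0 := by
  have line : ∀ u a : E N, HasDerivAt (fun ε : ℝ => u + ε • a) a 0 := fun u a => by
    simpa using ((hasDerivAt_id (0 : ℝ)).smul_const a).const_add u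
  have hinner : ∀ i j : ℕ,
      HasDerivAt (fun ε : ℝ => (inner ℝ (p i + ε • δp i) (q j + ε • δq j) : ℝ))
        ((inner ℝ (p i) (δq j) : ℝ) + (inner ℝ (δp i) (q j) : ℝ)) 0 := fun i j => by
    simpa using (line (p i) (δp i)).inner ℝ (line (q j) (δq j))
  have hH : ∀ k : ℕ,
      HasDerivAt (fun ε : ℝ => Hd k (q k + ε • δq k, p (k + 1) + ε • δp (k + 1)))
        ((inner ℝ (D1 (Hd k) (q k) (p (k + 1))) (δq k) : ℝ)
          + (inner ℝ (D2 (Hd k) (q k) (p (k + 1))) (δp (k + 1)) : ℝ)) 0 := fun k => by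
    have hcurve : HasDerivAt
        (fun ε : ℝ => ((q k + ε • δq k, p (k + 1) + ε • δp (k + 1)) : E N × E N))
        ((δq k, δp (k + 1)) : E N × E N) 0 := (line _ _).prodMk (line _ _)
    have hf : HasFDerivAt (Hd k) (fderiv ℝ (Hd k) (q k, p (k + 1)))
        ((q k + (0 : ℝ) • δq k, p (k + 1) + (0 : ℝ) • δp (k + 1)) : E N × E N) := by
      simpa using ((hHd k) (q k, p (k + 1))).hasFDerivAt
    have := hf.comp_hasDerivAt 0 hcurve
    rwa [fderiv_apply_pair (Hd k) (hHd k)] at this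
  have hsum := HasDerivAt.sum (u := Finset.range K)
      (fun k _ => (hinner (k + 1) (k + 1)).sub (hH k))
  simpa only [Bd, Finset.sum_fn, Pi.sub_def] using (hinner K K).sub hsum

/-- The telescoping auxiliary function. -/
noncomputable def Gtel {N : ℕ} (Hd : ℕ → E N × E N → ℝ) (Fplus : ℕ → E N × E N → E N)
    (q p δq δp : ℕ → E N) : ℕ → ℝ := fun j =>
  if j = 0 then 0 else
    (inner ℝ (p j) (δq j) : ℝ) + (inner ℝ (δp j) (q j) : ℝ)
      - (inner ℝ (D2 (Hd (j - 1)) (q (j - 1)) (p j) - Fplus (j - 1) (q (j - 1), p j)) (δp j) : ℝ)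

lemma key_identity {N K : ℕ} (hK : 1 ≤ K) (Hd : ℕ → E N × E N → ℝ)
    (Fminus Fplus : ℕ → E N × E N → E N) (hHd : ∀ k, Differentiable ℝ (Hd k))
    (q p : ℕ → E N) (δq δp : ℕ → E N) (hq0 : δq 0 = 0) (hpK : δp K = 0) :
    deriv (fun ε : ℝ =>
        Bd K Hd (fun k => q k + ε • δq k) (fun k => p k + ε • δp k)) 0
      - ∑ k ∈ Finset.range K,
          ((inner ℝ (Fminus k (q k, p (k + 1))) (δq k) : ℝ)
            + (inner ℝ (Fplus k (q k, p (k + 1))) (δp (k + 1)) : ℝ))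
    = ∑ k ∈ Finset.range K, (if k = 0 then 0 else
        (inner ℝ (D1 (Hd k) (q k) (p (k + 1)) - Fminus k (q k, p (k + 1)) - p k) (δq k) : ℝ)
          + (inner ℝ (D2 (Hd (k - 1)) (q (k - 1)) (p k) - Fplus (k - 1) (q (k - 1), p k) - q k)
              (δp k) : ℝ)) := by
  rw [(hasDerivAt_Bd Hd hHd q p δq δp).deriv]
  rw [sub_sub, ← Finset.sum_add_distrib, sub_eq_iff_eq_add, ← Finset.sum_add_distrib]
  have hsum : ∀ k ∈ Finset.range K,
      ((if k = 0 then 0 else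
        (inner ℝ (D1 (Hd k) (q k) (p (k + 1)) - Fminus k (q k, p (k + 1)) - p k) (δq k) : ℝ)
          + (inner ℝ (D2 (Hd (k - 1)) (q (k - 1)) (p k) - Fplus (k - 1) (q (k - 1), p k) - q k)
              (δp k) : ℝ))
        + (((inner ℝ (p (k + 1)) (δq (k + 1)) : ℝ) + (inner ℝ (δp (k + 1)) (q (k + 1)) : ℝ)
              - ((inner ℝ (D1 (Hd k) (q k) (p (k + 1))) (δq k) : ℝ)
                 + (inner ℝ (D2 (Hd k) (q k) (p (k + 1))) (δp (k + 1)) : ℝ)))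
            + ((inner ℝ (Fminus k (q k, p (k + 1))) (δq k) : ℝ)
                + (inner ℝ (Fplus k (q k, p (k + 1))) (δp (k + 1)) : ℝ))))
      = Gtel Hd Fplus q p δq δp (k + 1) - Gtel Hd Fplus q p δq δp k := by
    intro k _
    match k with
    | 0 =>
      simp only [Gtel, Nat.add_sub_cancel, hq0, inner_zero_right, inner_sub_left,
        eq_self_iff_true, if_true, Nat.one_ne_zero, if_false]
      norm_num
      ring
    | (k + 1) =>
      simp only [Gtel, if_neg (Nat.succ_ne_zero _), Nat.add_sub_cancel, inner_sub_left]
      rw [real_inner_comm (δp (k + 1)) (q (k + 1))]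
      ring
  rw [Finset.sum_congr rfl hsum, Finset.sum_range_sub]
  have hK0 : K ≠ 0 := by omega
  simp [Gtel, if_neg hK0, hpK]

/-- **Discrete stochastic Lagrange–d'Alembert principle in phase space** (Theorem 3.1,
pathwise deterministic form): a discrete curve satisfies the discrete Lagrange–d'Alembert
equations for `k = 1,…,K−1` iff for every variation vanishing at `δq₀` and `δp_K`, the
variation of the discrete action minus the discrete virtual work vanishes. -/
theorem discrete_lagrange_dalembert_principle
    {N K : ℕ} (hN : 1 ≤ N) (hK : 2 ≤ K)
    (Hd : ℕ → E N × E N → ℝ) (Fminus Fplus : ℕ → E N × E N → E N)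
    (hHd : ∀ k, Differentiable ℝ (Hd k))
    (q p : ℕ → E N) :
    (∀ k, 1 ≤ k → k ≤ K - 1 →
        q k = D2 (Hd (k - 1)) (q (k - 1)) (p k) - Fplus (k - 1) (q (k - 1), p k) ∧
        p k = D1 (Hd k) (q k) (p (k + 1)) - Fminus k (q k, p (k + 1)))
    ↔
    (∀ δq δp : ℕ → E N, δq 0 = 0 → δp K = 0 →
      deriv (fun ε : ℝ =>
          Bd K Hd (fun k => q k + ε • δq k) (fun k => p k + ε • δp k)) 0
        - ∑ k ∈ Finset.range K,
            ((inner ℝ (Fminus k (q k, p (k + 1))) (δq k) : ℝ)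
              + (inner ℝ (Fplus k (q k, p (k + 1))) (δp (k + 1)) : ℝ)) = 0) := by
  have hK1 : 1 ≤ K := by omega
  constructor
  · intro heq δq δp hq0 hpK
    rw [key_identity hK1 Hd Fminus Fplus hHd q p δq δp hq0 hpK]
    apply Finset.sum_eq_zero
    intro k hk
    rcases Nat.eq_zero_or_pos k with h0 | h1
    · simp [h0]
    · have hkK : k ≤ K - 1 := by have := Finset.mem_range.mp hk; omega
      obtain ⟨e1, e2⟩ := heq k h1 hkK
      rw [if_neg (by omega : k ≠ 0)]
      rw [sub_eq_zero.mpr e2.symm, sub_eq_zero.mpr e1.symm]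
      simp
  · intro hvar k hk1 hkK
    have hkK' : k < K := by omega
    constructor
    · -- q-equation, via a δp-variation
      set B : E N := D2 (Hd (k - 1)) (q (k - 1)) (p k) - Fplus (k - 1) (q (k - 1), p k) - q k
        with hB
      have hδpK : (fun j => if j = k then B else 0) K = 0 := by
        simp [show K ≠ k by omega]
      have h := hvar (fun _ => 0) (fun j => if j = k then B else 0) rfl hδpK
      rw [key_identity hK1 Hd Fminus Fplus hHd q p _ _ rfl hδpK] at h
      rw [Finset.sum_eq_single k
          (fun j _ hj => by simp [if_neg hj])
          (fun hnk => absurd (Finset.mem_range.mpr hkK') hnk)] at h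
      rw [if_neg (by omega : k ≠ 0)] at h
      simp only [eq_self_iff_true, if_true, inner_zero_right, zero_add, ← hB] at h
      have hB0 : B = 0 := by rwa [inner_self_eq_zero] at h
      rw [hB] at hB0
      have := sub_eq_zero.mp hB0
      exact this.symm
    · -- p-equation, via a δq-variation
      set A : E N := D1 (Hd k) (q k) (p (k + 1)) - Fminus k (q k, p (k + 1)) - p k with hA
      have hδq0 : (fun j => if j = k then A else 0) 0 = 0 := by
        simp [show (0 : ℕ) ≠ k by omega]
      have h := hvar (fun j => if j = k then A else 0) (fun _ => 0) hδq0 rfl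
      rw [key_identity hK1 Hd Fminus Fplus hHd q p _ _ hδq0 rfl] at h
      rw [Finset.sum_eq_single k
          (fun j _ hj => by simp [if_neg hj])
          (fun hnk => absurd (Finset.mem_range.mpr hkK') hnk)] at h
      rw [if_neg (by omega : k ≠ 0)] at h
      simp only [eq_self_iff_true, if_true, inner_zero_right, add_zero, ← hA] at h
      have hA0 : A = 0 := by rwa [inner_self_eq_zero] at h
      rw [hA] at hA0
      have := sub_eq_zero.mp hA0
      exact this.symm
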